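/- arXiv:math/9902118 — 2 statements merged into one kernel-verified Lean document; each statement's English description precedes it below -/
import Mathlib

section
/- Let V ⊆ H⁰(ℙ¹, O(2)) be a base point free linear system of quadrics on ℙ¹ (i.e., degree-2 forms in two variables with no common zero). If the Koszul (trivial) relations among a generating set of V are generated by linear syzygies, then V is the complete linear system of quadrics, i.e., dim V = 3. -/
/-!
STATEMENT 0: A base point free linear system `V ⊆ H⁰(ℙ¹, O(2))` of quadrics on `ℙ¹`
(degree-2 forms in two variables with no common nontrivial zero), generated by forms
`F₀, …, F_{m-1}`, whose Koszul (trivial) relations are generated by linear syzygies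
(condition `(K₂)`), is the complete system of quadrics, i.e. `dim V = 3`; equivalently,
every degree-2 form lies in the `ℂ`-span of the `F i`.
-/

open MvPolynomial

/-- The set of linear syzygies among the forms `F i`: vectors of degree-1 homogeneous
polynomials `a` with `∑ aᵢ Fᵢ = 0`. -/
def LinearSyzygies {m n : ℕ} (F : Fin m → MvPolynomial (Fin n) ℂ) :
    Set (Fin m → MvPolynomial (Fin n) ℂ) :=
  {a | (∀ i, (a i).IsHomogeneous 1) ∧ ∑ i, a i * F i = 0}

/-- Condition `(K_d)`: the trivial (Koszul) relations `Fᵢ·Fⱼ - Fⱼ·Fᵢ = 0`, i.e. the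
syzygies `eᵢ Fⱼ - eⱼ Fᵢ`, lie in the module generated by the linear syzygies. -/
def SatisfiesK {m n : ℕ} (F : Fin m → MvPolynomial (Fin n) ℂ) : Prop :=
  ∀ i j : Fin m,
    (Pi.single i (F j) - Pi.single j (F i)) ∈
      Submodule.span (MvPolynomial (Fin n) ℂ) (LinearSyzygies F)


lemma aux_fin2_degree (μ : Fin 2 →₀ ℕ) : μ.degree = μ 0 + μ 1 := by
  rw [Finsupp.degree_apply,
    Finset.sum_subset (Finset.subset_univ _) (fun x _ hx => Finsupp.notMem_support_iff.mp hx)]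
  exact Fin.sum_univ_two μ

lemma aux_fin2_eq (μ : Fin 2 →₀ ℕ) : μ = Finsupp.single 0 (μ 0) + Finsupp.single 1 (μ 1) := by
  ext i
  fin_cases i <;> simp [Finsupp.single_apply]

lemma aux_fin2_single_add_eq {a b u v : ℕ} :
    (Finsupp.single 0 a + Finsupp.single 1 b : Fin 2 →₀ ℕ)
      = Finsupp.single 0 u + Finsupp.single 1 v ↔ a = u ∧ b = v := by
  constructor
  · intro h
    have h0 := congrArg (fun f : Fin 2 →₀ ℕ => f 0) h
    have h1 := congrArg (fun f : Fin 2 →₀ ℕ => f 1) h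
    simp [Finsupp.single_apply] at h0 h1
    exact ⟨h0, h1⟩
  · rintro ⟨rfl, rfl⟩; rfl

lemma aux_coeff_pow (a b : ℕ) (μ : Fin 2 →₀ ℕ) :
    coeff μ ((X 0 : MvPolynomial (Fin 2) ℂ) ^ a * X 1 ^ b)
      = if Finsupp.single 0 a + Finsupp.single 1 b = μ then 1 else 0 := by
  rw [X_pow_eq_monomial, X_pow_eq_monomial, monomial_mul, coeff_monomial, mul_one]


lemma aux_coeff_X0 (μ : Fin 2 →₀ ℕ) :
    coeff μ (X 0 : MvPolynomial (Fin 2) ℂ)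
      = if Finsupp.single 0 1 + Finsupp.single 1 0 = μ then 1 else 0 := by
  rw [show (X 0 : MvPolynomial (Fin 2) ℂ) = X 0 ^ 1 * X 1 ^ 0 by ring, aux_coeff_pow]

lemma aux_coeff_X1 (μ : Fin 2 →₀ ℕ) :
    coeff μ (X 1 : MvPolynomial (Fin 2) ℂ)
      = if Finsupp.single 0 0 + Finsupp.single 1 1 = μ then 1 else 0 := by
  rw [show (X 1 : MvPolynomial (Fin 2) ℂ) = X 0 ^ 0 * X 1 ^ 1 by ring, aux_coeff_pow]

lemma aux_coeff_X0X1 (μ : Fin 2 →₀ ℕ) :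
    coeff μ (X 0 * X 1 : MvPolynomial (Fin 2) ℂ)
      = if Finsupp.single 0 1 + Finsupp.single 1 1 = μ then 1 else 0 := by
  rw [show (X 0 * X 1 : MvPolynomial (Fin 2) ℂ) = X 0 ^ 1 * X 1 ^ 1 by ring, aux_coeff_pow]

lemma aux_coeff_X0sq (μ : Fin 2 →₀ ℕ) :
    coeff μ (X 0 ^ 2 : MvPolynomial (Fin 2) ℂ)
      = if Finsupp.single 0 2 + Finsupp.single 1 0 = μ then 1 else 0 := by
  rw [show (X 0 ^ 2 : MvPolynomial (Fin 2) ℂ) = X 0 ^ 2 * X 1 ^ 0 by ring, aux_coeff_pow]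

lemma aux_coeff_X1sq (μ : Fin 2 →₀ ℕ) :
    coeff μ (X 1 ^ 2 : MvPolynomial (Fin 2) ℂ)
      = if Finsupp.single 0 0 + Finsupp.single 1 2 = μ then 1 else 0 := by
  rw [show (X 1 ^ 2 : MvPolynomial (Fin 2) ℂ) = X 0 ^ 0 * X 1 ^ 2 by ring, aux_coeff_pow]

lemma aux_hom1 (P : MvPolynomial (Fin 2) ℂ) (h : P.IsHomogeneous 1) :
    P = C (coeff (Finsupp.single 0 1) P) * X 0 + C (coeff (Finsupp.single 1 1) P) * X 1 := by
  apply MvPolynomial.ext; intro μ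
  rw [coeff_add, coeff_C_mul, coeff_C_mul, aux_coeff_X0, aux_coeff_X1]
  have hμ := aux_fin2_eq μ
  by_cases hd : μ 0 + μ 1 = 1
  · have hcase : (μ 0 = 1 ∧ μ 1 = 0) ∨ (μ 0 = 0 ∧ μ 1 = 1) := by omega
    rcases hcase with ⟨h0, h1⟩ | ⟨h0, h1⟩ <;>
      · rw [hμ, h0, h1]
        simp only [aux_fin2_single_add_eq]
        norm_num [Finsupp.single_zero]
  · rw [h.coeff_eq_zero (by rw [aux_fin2_degree]; exact hd), hμ]
    simp only [aux_fin2_single_add_eq]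
    split_ifs <;> first | omega | ring

lemma aux_hom2 (P : MvPolynomial (Fin 2) ℂ) (h : P.IsHomogeneous 2) :
    P = C (coeff (Finsupp.single 0 2) P) * X 0 ^ 2
      + C (coeff (Finsupp.single 0 1 + Finsupp.single 1 1) P) * (X 0 * X 1)
      + C (coeff (Finsupp.single 1 2) P) * X 1 ^ 2 := by
  apply MvPolynomial.ext; intro μ
  rw [coeff_add, coeff_add, coeff_C_mul, coeff_C_mul, coeff_C_mul,
    aux_coeff_X0sq, aux_coeff_X0X1, aux_coeff_X1sq]
  have hμ := aux_fin2_eq μ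
  by_cases hd : μ 0 + μ 1 = 2
  · have hcase : (μ 0 = 2 ∧ μ 1 = 0) ∨ (μ 0 = 1 ∧ μ 1 = 1) ∨ (μ 0 = 0 ∧ μ 1 = 2) := by omega
    rcases hcase with ⟨h0, h1⟩ | ⟨h0, h1⟩ | ⟨h0, h1⟩ <;>
      · rw [hμ, h0, h1]
        simp only [aux_fin2_single_add_eq]
        norm_num [Finsupp.single_zero]
  · rw [h.coeff_eq_zero (by rw [aux_fin2_degree]; exact hd), hμ]
    simp only [aux_fin2_single_add_eq]
    split_ifs <;> first | omega | ring



lemma aux_hom2' (P : MvPolynomial (Fin 2) ℂ) (h : P.IsHomogeneous 2) :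
    ∃ p q r : ℂ, P = C p * X 0 ^ 2 + C q * (X 0 * X 1) + C r * X 1 ^ 2 :=
  ⟨_, _, _, aux_hom2 P h⟩

/-- `A`-part of a syzygy. -/
noncomputable def Aof {m : ℕ} (F a : Fin m → MvPolynomial (Fin 2) ℂ) : MvPolynomial (Fin 2) ℂ :=
  ∑ k, coeff (Finsupp.single 0 1) (a k) • F k

noncomputable def Bof {m : ℕ} (F a : Fin m → MvPolynomial (Fin 2) ℂ) : MvPolynomial (Fin 2) ℂ :=
  ∑ k, coeff (Finsupp.single 1 1) (a k) • F k

lemma Aof_mem {m : ℕ} (F a : Fin m → MvPolynomial (Fin 2) ℂ) :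
    Aof F a ∈ Submodule.span ℂ (Set.range F) :=
  Submodule.sum_mem _ fun k _ =>
    Submodule.smul_mem _ _ (Submodule.subset_span ⟨k, rfl⟩)

lemma Bof_mem {m : ℕ} (F a : Fin m → MvPolynomial (Fin 2) ℂ) :
    Bof F a ∈ Submodule.span ℂ (Set.range F) :=
  Submodule.sum_mem _ fun k _ =>
    Submodule.smul_mem _ _ (Submodule.subset_span ⟨k, rfl⟩)

lemma Aof_hom {m : ℕ} (F a : Fin m → MvPolynomial (Fin 2) ℂ)
    (hdeg : ∀ i, (F i).IsHomogeneous 2) : (Aof F a).IsHomogeneous 2 := by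
  rw [← mem_homogeneousSubmodule]
  exact Submodule.sum_mem _ fun k _ =>
    Submodule.smul_mem _ _ ((mem_homogeneousSubmodule _ _).mpr (hdeg k))

lemma Bof_hom {m : ℕ} (F a : Fin m → MvPolynomial (Fin 2) ℂ)
    (hdeg : ∀ i, (F i).IsHomogeneous 2) : (Bof F a).IsHomogeneous 2 := by
  rw [← mem_homogeneousSubmodule]
  exact Submodule.sum_mem _ fun k _ =>
    Submodule.smul_mem _ _ ((mem_homogeneousSubmodule _ _).mpr (hdeg k))

lemma syz_eq {m : ℕ} (F : Fin m → MvPolynomial (Fin 2) ℂ) (a : Fin m → MvPolynomial (Fin 2) ℂ)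
    (ha : a ∈ LinearSyzygies F) : X 0 * Aof F a + X 1 * Bof F a = 0 := by
  obtain ⟨hhom, hsum⟩ := ha
  calc X 0 * Aof F a + X 1 * Bof F a
      = ∑ k, a k * F k := by
        rw [Aof, Bof, Finset.mul_sum, Finset.mul_sum, ← Finset.sum_add_distrib]
        refine Finset.sum_congr rfl fun k _ => ?_
        conv_rhs => rw [aux_hom1 (a k) (hhom k)]
        rw [smul_eq_C_mul, smul_eq_C_mul]
        ring
    _ = 0 := hsum

lemma eval_form (p q r : ℂ) (z : Fin 2 → ℂ) :
    eval z (C p * X 0 ^ 2 + C q * (X 0 * X 1) + C r * X 1 ^ 2) =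
      p * z 0 ^ 2 + q * (z 0 * z 1) + r * z 1 ^ 2 := by
  simp only [eval_add, eval_mul, eval_pow, eval_C, eval_X]

lemma case_ex {m : ℕ} (F : Fin m → MvPolynomial (Fin 2) ℂ)
    (hdeg : ∀ i, (F i).IsHomogeneous 2)
    (hbpf : ∀ z : Fin 2 → ℂ, z ≠ 0 → ∃ i, MvPolynomial.eval z (F i) ≠ 0)
    (a : Fin m → MvPolynomial (Fin 2) ℂ) (ha : a ∈ LinearSyzygies F)
    (hA : Aof F a ≠ 0) :
    ∀ G : MvPolynomial (Fin 2) ℂ, G.IsHomogeneous 2 →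
      G ∈ Submodule.span ℂ (Set.range F) := by
  intro G hG
  obtain ⟨pA, qA, rA, hArep⟩ := aux_hom2' (Aof F a) (Aof_hom F a hdeg)
  obtain ⟨pB, qB, rB, hBrep⟩ := aux_hom2' (Bof F a) (Bof_hom F a hdeg)
  obtain ⟨g1, g2, g3, hGrep⟩ := aux_hom2' G hG
  have hsz := syz_eq F a ha
  have key : ∀ s t : ℂ,
      s * (pA * s ^ 2 + qA * (s * t) + rA * t ^ 2)
        + t * (pB * s ^ 2 + qB * (s * t) + rB * t ^ 2) = 0 := by
    intro s t
    have h := congrArg (eval ![s, t]) hsz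
    rw [eval_add, eval_mul, eval_mul, eval_X, eval_X, hArep, hBrep,
      eval_form, eval_form, map_zero] at h
    simpa using h
  have hpA : pA = 0 := by linear_combination key 1 0
  have hrB : rB = 0 := by linear_combination key 0 1
  have hpB : pB = -qA := by linear_combination key 1 1 / 2 - key 1 (-1) / 2 - key 0 1
  have hqB : qB = -rA := by linear_combination key 1 1 / 2 + key 1 (-1) / 2 - key 1 0
  rw [hpA] at hArep
  rw [hpB, hqB, hrB] at hBrep
  -- (qA, rA) ≠ (0,0)
  have hqr : ¬(qA = 0 ∧ rA = 0) := by
    rintro ⟨h1, h2⟩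
    apply hA
    rw [hArep, h1, h2]
    simp
  have hz0 : (![rA, -qA] : Fin 2 → ℂ) ≠ 0 := by
    intro h
    apply hqr
    have h0 := congrFun h 0
    have h1 := congrFun h 1
    simp at h0 h1
    exact ⟨by simpa using h1, h0⟩
  obtain ⟨k, hk⟩ := hbpf ![rA, -qA] hz0
  obtain ⟨pF, qF, rF, hFrep⟩ := aux_hom2' (F k) (hdeg k)
  have hΔ : pF * rA ^ 2 + qF * (rA * -qA) + rF * (-qA) ^ 2 ≠ 0 := by
    intro h
    apply hk
    rw [hFrep, eval_form]
    simpa using h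
  set Δ : ℂ := pF * rA ^ 2 + qF * (rA * -qA) + rF * (-qA) ^ 2 with hΔdef
  set s1 : ℂ := (qA * rF - rA * qF) * g1 + pF * rA * g2 - pF * qA * g3 with hs1
  set s2 : ℂ := -(rA * rF) * g1 + qA * rF * g2 + (pF * rA - qA * qF) * g3 with hs2
  set s3 : ℂ := rA ^ 2 * g1 - qA * rA * g2 + qA ^ 2 * g3 with hs3
  have claim : Δ • G = s1 • (-(Bof F a)) + s2 • (Aof F a) + s3 • (F k) := by
    apply MvPolynomial.funext
    intro z
    rw [smul_eval, eval_add, eval_add, smul_eval, smul_eval, smul_eval, eval_neg,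
      hGrep, hArep, hBrep, hFrep, eval_form, eval_form, eval_form, eval_form, hΔdef, hs1, hs2, hs3]
    ring
  have hmem : Δ • G ∈ Submodule.span ℂ (Set.range F) := by
    rw [claim]
    exact Submodule.add_mem _
      (Submodule.add_mem _
        (Submodule.smul_mem _ _ (Submodule.neg_mem _ (Bof_mem F a)))
        (Submodule.smul_mem _ _ (Aof_mem F a)))
      (Submodule.smul_mem _ _ (Submodule.subset_span ⟨k, rfl⟩))
  have := Submodule.smul_mem (Submodule.span ℂ (Set.range F)) Δ⁻¹ hmem
  rwa [smul_smul, inv_mul_cancel₀ hΔ, one_smul] at this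

lemma case_triv {m : ℕ} (F : Fin m → MvPolynomial (Fin 2) ℂ)
    (hdeg : ∀ i, (F i).IsHomogeneous 2)
    (hbpf : ∀ z : Fin 2 → ℂ, z ≠ 0 → ∃ i, MvPolynomial.eval z (F i) ≠ 0)
    (hK : SatisfiesK F)
    (hall : ∀ a ∈ LinearSyzygies F, Aof F a = 0) : False := by
  classical
  have hallB : ∀ a ∈ LinearSyzygies F, Bof F a = 0 := by
    intro a ha
    have h := syz_eq F a ha
    rw [hall a ha, mul_zero, zero_add] at h
    exact (mul_eq_zero.mp h).resolve_left (X_ne_zero 1)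
  set lam : Fin m → ℂ := fun k => coeff (Finsupp.single 0 2) (F k) with hlam
  set Λ : (Fin m → MvPolynomial (Fin 2) ℂ) →ₗ[MvPolynomial (Fin 2) ℂ] MvPolynomial (Fin 2) ℂ :=
    { toFun := fun b => ∑ k, C (lam k) * b k
      map_add' := by
        intro b c
        simp [mul_add, Finset.sum_add_distrib]
      map_smul' := by
        intro r b
        simp only [Pi.smul_apply, smul_eq_mul, RingHom.id_apply, Finset.mul_sum]
        exact Finset.sum_congr rfl fun k _ => by ring } with hΛ
  have hker : LinearSyzygies F ⊆ (LinearMap.ker Λ : Submodule _ _) := by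
    intro a ha
    have hA0 : ∑ k, lam k * coeff (Finsupp.single 0 1) (a k) = 0 := by
      have h := congrArg (coeff (Finsupp.single 0 2)) (hall a ha)
      rw [Aof, coeff_sum, coeff_zero] at h
      simp only [coeff_smul, smul_eq_mul] at h
      rw [← h]
      exact Finset.sum_congr rfl fun k _ => mul_comm _ _
    have hB0 : ∑ k, lam k * coeff (Finsupp.single 1 1) (a k) = 0 := by
      have h := congrArg (coeff (Finsupp.single 0 2)) (hallB a ha)
      rw [Bof, coeff_sum, coeff_zero] at h
      simp only [coeff_smul, smul_eq_mul] at h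
      rw [← h]
      exact Finset.sum_congr rfl fun k _ => mul_comm _ _
    have : Λ a = 0 := by
      show ∑ k, C (lam k) * a k = 0
      calc ∑ k, C (lam k) * a k
          = ∑ k, (C (lam k * coeff (Finsupp.single 0 1) (a k)) * X 0
              + C (lam k * coeff (Finsupp.single 1 1) (a k)) * X 1) := by
            refine Finset.sum_congr rfl fun k _ => ?_
            conv_lhs => rw [aux_hom1 (a k) (ha.1 k)]
            rw [C_mul, C_mul]
            ring
        _ = C (∑ k, lam k * coeff (Finsupp.single 0 1) (a k)) * X 0
              + C (∑ k, lam k * coeff (Finsupp.single 1 1) (a k)) * X 1 := by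
            rw [Finset.sum_add_distrib, ← Finset.sum_mul, ← Finset.sum_mul, map_sum, map_sum]
        _ = 0 := by rw [hA0, hB0]; simp
    exact this
  have hsingle : ∀ (i : Fin m) (P : MvPolynomial (Fin 2) ℂ),
      Λ (Pi.single i P) = C (lam i) * P := by
    intro i P
    show ∑ k, C (lam k) * (Pi.single i P : Fin m → MvPolynomial (Fin 2) ℂ) k = C (lam i) * P
    rw [Finset.sum_eq_single i]
    · rw [Pi.single_eq_same]
    · intro b _ hb
      rw [Pi.single_eq_of_ne hb, mul_zero]
    · intro h
      exact absurd (Finset.mem_univ i) h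
  have hkos : ∀ i j : Fin m, C (lam i) * F j - C (lam j) * F i = 0 := by
    intro i j
    have hmem := hK i j
    have h0 : Λ (Pi.single i (F j) - Pi.single j (F i)) = 0 := by
      have hle : Submodule.span (MvPolynomial (Fin 2) ℂ) (LinearSyzygies F) ≤ LinearMap.ker Λ :=
        Submodule.span_le.mpr hker
      exact LinearMap.mem_ker.mp (hle hmem)
    rw [map_sub, hsingle, hsingle] at h0
    exact h0
  -- endgame
  have h10 : (![1, 0] : Fin 2 → ℂ) ≠ 0 := by
    intro h
    have := congrFun h 0
    simp at this
  obtain ⟨i₀, hi₀⟩ := hbpf ![1, 0] h10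
  set p : ℂ := coeff (Finsupp.single 0 2) (F i₀) with hp
  set q : ℂ := coeff (Finsupp.single 0 1 + Finsupp.single 1 1) (F i₀) with hq
  set r : ℂ := coeff (Finsupp.single 1 2) (F i₀) with hr
  have hrep := aux_hom2 (F i₀) (hdeg i₀)
  have hpne : p ≠ 0 := by
    intro h
    apply hi₀
    rw [hrep, eval_form]
    simp [← hp, ← hq, ← hr, h]
  -- find a root of p t² + q t + r
  have hdegP : (0 : WithBot ℕ) < (Polynomial.C p * Polynomial.X ^ 2
      + Polynomial.C q * Polynomial.X + Polynomial.C r).degree := by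
    rw [Polynomial.degree_quadratic hpne]
    norm_num
  obtain ⟨t, ht⟩ := Complex.exists_root hdegP
  have ht' : p * t ^ 2 + q * t + r = 0 := by
    have := ht
    simp only [Polynomial.IsRoot, Polynomial.eval_add, Polynomial.eval_mul,
      Polynomial.eval_pow, Polynomial.eval_C, Polynomial.eval_X] at this
    linear_combination this
  have hz1 : (![t, 1] : Fin 2 → ℂ) ≠ 0 := by
    intro h
    have := congrFun h 1
    simp at this
  have hvanish : eval ![t, 1] (F i₀) = 0 := by
    rw [hrep, eval_form]
    simp only [← hp, ← hq, ← hr, Matrix.cons_val_zero, Matrix.cons_val_one, Matrix.head_cons]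
    linear_combination ht'
  obtain ⟨j, hj⟩ := hbpf ![t, 1] hz1
  have hko := hkos i₀ j
  have := congrArg (eval ![t, 1]) hko
  rw [map_sub, eval_mul, eval_mul, eval_C, eval_C, hvanish, map_zero] at this
  have hlami₀ : lam i₀ = p := rfl
  rw [hlami₀, mul_zero, sub_zero] at this
  exact hj (by
    rcases mul_eq_zero.mp this with h | h
    · exact absurd h hpne
    · exact h)


theorem stmt0 {m : ℕ} (F : Fin m → MvPolynomial (Fin 2) ℂ)
    (hdeg : ∀ i, (F i).IsHomogeneous 2)
    (hbpf : ∀ z : Fin 2 → ℂ, z ≠ 0 → ∃ i, MvPolynomial.eval z (F i) ≠ 0)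
    (hK : SatisfiesK F) :
    ∀ G : MvPolynomial (Fin 2) ℂ, G.IsHomogeneous 2 →
      G ∈ Submodule.span ℂ (Set.range F) := by
  intro G hG
  by_cases hcase : ∃ a ∈ LinearSyzygies F, Aof F a ≠ 0
  · obtain ⟨a, ha, hA⟩ := hcase
    exact case_ex F hdeg hbpf a ha hA G hG
  · push_neg at hcase
    exact (case_triv F hdeg hbpf hK hcase).elim
end

section
/- Let V be a linear system of degree-d forms on ℙⁿ satisfying condition (K_d), and let M ≅ ℙᵏ ⊆ ℙⁿ be a linear subspace. Then the restriction of V to M satisfies condition (K_d). -/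
open MvPolynomial

/-- Restriction of a form on `ℙⁿ` to the linear subspace `ℙᵏ` parametrized by the
matrix `A`, i.e. substitution `zⱼ ↦ ∑_b A j b · w_b`. -/
noncomputable def restrictTo {n k : ℕ} (A : Matrix (Fin n) (Fin k) ℂ)
    (F : MvPolynomial (Fin n) ℂ) : MvPolynomial (Fin k) ℂ :=
  MvPolynomial.aeval (fun j => ∑ b, MvPolynomial.C (A j b) * MvPolynomial.X b) F

lemma restrictTo_hom {n k : ℕ} (A : Matrix (Fin n) (Fin k) ℂ)
    {F : MvPolynomial (Fin n) ℂ} {d : ℕ} (h : F.IsHomogeneous d) :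
    (restrictTo A F).IsHomogeneous d := by
  have := h.aeval (fun j => ∑ b, MvPolynomial.C (A j b) * MvPolynomial.X b) (n := 1) ?_
  · simpa [restrictTo] using this
  · intro j
    apply MvPolynomial.IsHomogeneous.sum
    intro b _
    simpa using MvPolynomial.isHomogeneous_C_mul_X_pow (A j b) b 1

theorem stmt3 {m n k : ℕ} (d : ℕ) (F : Fin m → MvPolynomial (Fin (n + 1)) ℂ)
    (hdeg : ∀ i, (F i).IsHomogeneous d)
    (hK : SatisfiesK F)
    (A : Matrix (Fin (n + 1)) (Fin (k + 1)) ℂ)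
    (hA : Function.Injective A.mulVec) :
    SatisfiesK (fun i => restrictTo A (F i)) := by
  set φ : MvPolynomial (Fin (n + 1)) ℂ →+* MvPolynomial (Fin (k + 1)) ℂ :=
    (MvPolynomial.aeval (fun j => ∑ b, MvPolynomial.C (A j b) * MvPolynomial.X b)).toRingHom
    with hφ
  have hφ_eq : ∀ p, φ p = restrictTo A p := fun p => rfl
  -- the semilinear map applying φ componentwise
  let Φ : (Fin m → MvPolynomial (Fin (n + 1)) ℂ) →ₛₗ[φ]
      (Fin m → MvPolynomial (Fin (k + 1)) ℂ) :=
    { toFun := fun v i => φ (v i)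
      map_add' := fun v w => by funext i; simp
      map_smul' := fun c v => by funext i; simp [Pi.smul_apply, smul_eq_mul] }
  intro i j
  have hsingle : ∀ (x : MvPolynomial (Fin (n+1)) ℂ) (s : Fin m),
      (fun r => φ ((Pi.single s x : Fin m → MvPolynomial (Fin (n+1)) ℂ) r)) = Pi.single s (φ x) := by
    intro x s
    funext r
    rcases eq_or_ne s r with rfl | h
    · simp
    · simp [Pi.single_eq_of_ne (Ne.symm h)]
  have himg : ∀ v ∈ LinearSyzygies F,
      Φ v ∈ Submodule.span (MvPolynomial (Fin (k + 1)) ℂ)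
        (LinearSyzygies (fun i => restrictTo A (F i))) := by
    rintro a ⟨ha1, ha2⟩
    apply Submodule.subset_span
    constructor
    · intro r
      exact restrictTo_hom A (ha1 r)
    · have h0 : φ (∑ r, a r * F r) = 0 := by rw [ha2]; simp
      rw [map_sum] at h0
      simp only [map_mul] at h0
      exact h0
  have main : ∀ v ∈ Submodule.span (MvPolynomial (Fin (n + 1)) ℂ) (LinearSyzygies F),
      Φ v ∈ Submodule.span (MvPolynomial (Fin (k + 1)) ℂ)
        (LinearSyzygies (fun i => restrictTo A (F i))) := by
    intro v hv
    induction hv using Submodule.span_induction with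
    | mem x hx => exact himg x hx
    | zero => simpa using Submodule.zero_mem _
    | add x y _ _ hx hy =>
        have : Φ (x + y) = Φ x + Φ y := map_add Φ x y
        rw [this]; exact Submodule.add_mem _ hx hy
    | smul c x _ hx =>
        have : Φ (c • x) = φ c • Φ x := Φ.map_smulₛₗ c x
        rw [this]; exact Submodule.smul_mem _ _ hx
  have hmap := main _ (hK i j)
  have hΦval : Φ (Pi.single i (F j) - Pi.single j (F i)) =
      Pi.single i (restrictTo A (F j)) - Pi.single j (restrictTo A (F i)) := by
    funext r
    have h1 := congrFun (hsingle (F j) i) r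
    have h2 := congrFun (hsingle (F i) j) r
    simp only [LinearMap.coe_mk, AddHom.coe_mk, Pi.sub_apply, map_sub, Φ]
    rw [h1, h2]; rfl
  rwa [hΦval] at hmap
end
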